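/- If the initial white set W_0 is finite, then for every r ≥ 1 the set T_r = W_r ∩ W_{r-1} of vertices white at both rounds r and r-1 is finite, and moreover every vertex in T_r has finite degree. -/

import Mathlib

open Cardinal

/-- Synchronous majority update by cardinality on a possibly infinite graph:
a vertex is white next round iff its white neighbors strictly outnumber (in
cardinality) its black neighbors, or the two cardinalities are equal and the
vertex was white. -/
def cardUpd {V : Type*} (G : SimpleGraph V) (W : Set V) : Set V :=
  {v | #↥(G.neighborSet v \ W) < #↥(G.neighborSet v ∩ W) ∨
       (#↥(G.neighborSet v ∩ W) = #↥(G.neighborSet v \ W) ∧ v ∈ W)}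

section Aux
variable {V : Type*} (G : SimpleGraph V)

lemma myAux_le {W : Set V} {v : V} (hv : v ∈ cardUpd G W) :
    #↥(G.neighborSet v \ W) ≤ #↥(G.neighborSet v ∩ W) := by
  rcases hv with h | ⟨h, _⟩
  · exact h.le
  · exact h.ge

lemma myAux_mem {W : Set V} {v : V} (hv : v ∈ cardUpd G W)
    (h : #↥(G.neighborSet v ∩ W) ≤ #↥(G.neighborSet v \ W)) : v ∈ W := by
  rcases hv with h' | ⟨_, h'⟩
  · exact absurd h' (not_lt.2 h)
  · exact h'

lemma myDeg_fin {W : Set V} {v : V} (hv : v ∈ cardUpd G W)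
    (hfin : (G.neighborSet v ∩ W).Finite) : (G.neighborSet v).Finite := by
  have h1 : (G.neighborSet v \ W).Finite := by
    rw [← Cardinal.lt_aleph0_iff_set_finite] at hfin ⊢
    exact lt_of_le_of_lt (myAux_le G hv) hfin
  have := hfin.union h1
  rwa [Set.inter_union_diff] at this

lemma myCard_helper {a b c : Cardinal} (ha : ℵ₀ ≤ a) (hc : c < ℵ₀) (h : a ≤ c + b) : a ≤ b := by
  by_cases hb : b < ℵ₀
  · exact absurd (h.trans_lt (Cardinal.add_lt_aleph0 hc hb)) (not_lt.2 ha)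
  · push_neg at hb
    rwa [Cardinal.add_eq_right hb (hc.le.trans hb)] at h

lemma myMem_of_disj {B : Set V} {v : V}
    (hvA : v ∈ cardUpd G B) (hv1 : v ∈ cardUpd G (cardUpd G B))
    (hd : G.neighborSet v ∩ (cardUpd G B ∩ B) = ∅) : v ∈ B := by
  set A := cardUpd G B with hA
  set N := G.neighborSet v with hN
  have h1 : N ∩ A ⊆ N \ B := fun x hx =>
    ⟨hx.1, fun hxB => Set.eq_empty_iff_forall_notMem.1 hd x ⟨hx.1, hx.2, hxB⟩⟩
  have h2 : N ∩ B ⊆ N \ A := fun x hx =>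
    ⟨hx.1, fun hxA => Set.eq_empty_iff_forall_notMem.1 hd x ⟨hx.1, hxA, hx.2⟩⟩
  have c1 : #↥(N ∩ A) ≤ #↥(N \ B) := Cardinal.mk_le_mk_of_subset h1
  have c2 : #↥(N \ B) ≤ #↥(N ∩ B) := myAux_le G hvA
  have c3 : #↥(N ∩ B) ≤ #↥(N \ A) := Cardinal.mk_le_mk_of_subset h2
  have c4 : #↥(N \ A) ≤ #↥(N ∩ A) := myAux_le G hv1
  exact myAux_mem G hvA (c3.trans (c4.trans c1))

lemma myMem_of_inf {B : Set V} {v : V}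
    (hvA : v ∈ cardUpd G B) (hv1 : v ∈ cardUpd G (cardUpd G B))
    (hfinT : (G.neighborSet v ∩ (cardUpd G B ∩ B)).Finite)
    (hinf : (G.neighborSet v).Infinite) : v ∈ B := by
  set A := cardUpd G B with hA
  set N := G.neighborSet v with hN
  have hNc : ℵ₀ ≤ #↥N := by
    haveI := hinf.to_subtype
    exact Cardinal.infinite_iff.1 ‹Infinite ↥N›
  have hc : #↥(N ∩ (A ∩ B)) < ℵ₀ := Cardinal.lt_aleph0_iff_set_finite.2 hfinT
  have hsplit : ∀ S : Set V, #↥N ≤ #↥(N ∩ S) + #↥(N \ S) := by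
    intro S
    calc #↥N = #↥((N ∩ S) ∪ (N \ S)) := by rw [Set.inter_union_diff]
    _ ≤ #↥(N ∩ S) + #↥(N \ S) := Cardinal.mk_union_le _ _
  have hinfA : ℵ₀ ≤ #↥(N ∩ A) := by
    by_contra hlt
    push_neg at hlt
    have := (hsplit A).trans (add_le_add_right (myAux_le G hv1) _)
    exact absurd (this.trans_lt (Cardinal.add_lt_aleph0 hlt hlt)) (not_lt.2 hNc)
  have hinfB : ℵ₀ ≤ #↥(N ∩ B) := by
    by_contra hlt
    push_neg at hlt
    have := (hsplit B).trans (add_le_add_right (myAux_le G hvA) _)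
    exact absurd (this.trans_lt (Cardinal.add_lt_aleph0 hlt hlt)) (not_lt.2 hNc)
  have hsub1 : N ∩ B ⊆ (N ∩ (A ∩ B)) ∪ (N \ A) := by
    intro x hx
    by_cases hxA : x ∈ A
    · exact Or.inl ⟨hx.1, hxA, hx.2⟩
    · exact Or.inr ⟨hx.1, hxA⟩
  have hsub2 : N ∩ A ⊆ (N ∩ (A ∩ B)) ∪ (N \ B) := by
    intro x hx
    by_cases hxB : x ∈ B
    · exact Or.inl ⟨hx.1, hx.2, hxB⟩
    · exact Or.inr ⟨hx.1, hxB⟩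
  have e1 : #↥(N ∩ B) ≤ #↥(N \ A) :=
    myCard_helper hinfB hc
      ((Cardinal.mk_le_mk_of_subset hsub1).trans (Cardinal.mk_union_le _ _))
  have e2 : #↥(N ∩ A) ≤ #↥(N \ B) :=
    myCard_helper hinfA hc
      ((Cardinal.mk_le_mk_of_subset hsub2).trans (Cardinal.mk_union_le _ _))
  exact myAux_mem G hvA (e1.trans ((myAux_le G hv1).trans e2))

end Aux

/-- If W₀ is finite then every Tᵣ = Wᵣ ∩ Wᵣ₋₁ is finite, and moreover every
vertex of Tᵣ has finite degree. -/
theorem T_finite {V : Type*} (G : SimpleGraph V) (W₀ : Set V) (hfin : W₀.Finite) :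
    ∀ r : ℕ,
      ((cardUpd G)^[r + 1] W₀ ∩ (cardUpd G)^[r] W₀).Finite ∧
      ∀ v ∈ (cardUpd G)^[r + 1] W₀ ∩ (cardUpd G)^[r] W₀,
        (G.neighborSet v).Finite := by
  intro r
  induction r with
  | zero =>
    simp only [zero_add, Function.iterate_one, Function.iterate_zero, id]
    refine ⟨hfin.subset Set.inter_subset_right, ?_⟩
    intro v hv
    exact myDeg_fin G hv.1 (hfin.subset Set.inter_subset_right)
  | succ r ih =>
    obtain ⟨hTfin, hTdeg⟩ := ih
    set B := (cardUpd G)^[r] W₀ with hB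
    have hA : (cardUpd G)^[r + 1] W₀ = cardUpd G B := Function.iterate_succ_apply' _ _ _
    have hA2 : (cardUpd G)^[r + 1 + 1] W₀ = cardUpd G (cardUpd G B) := by
      rw [Function.iterate_succ_apply', hA]
    rw [hA] at hTfin hTdeg
    rw [hA2, hA]
    set A := cardUpd G B with hAdef
    -- key: every v in (cardUpd G A) ∩ A is in A ∩ B, or has a neighbor in A ∩ B and finite degree
    have key : ∀ v ∈ cardUpd G A ∩ A,
        v ∈ A ∩ B ∨ ((G.neighborSet v ∩ (A ∩ B)).Nonempty ∧ (G.neighborSet v).Finite) := by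
      rintro v ⟨hv1, hvA⟩
      by_cases hvAB : v ∈ A ∩ B
      · exact Or.inl hvAB
      · refine Or.inr ⟨?_, ?_⟩
        · rw [Set.nonempty_iff_ne_empty]
          intro hd
          exact hvAB ⟨hvA, myMem_of_disj G hvA hv1 hd⟩
        · by_contra hinf
          rw [← Set.not_infinite, not_not] at hinf
          have hfinT : (G.neighborSet v ∩ (A ∩ B)).Finite := hTfin.inter_of_right _
          exact hvAB ⟨hvA, myMem_of_inf G hvA hv1 hfinT hinf⟩
    constructor
    · have hsub : cardUpd G A ∩ A ⊆ (A ∩ B) ∪ ⋃ u ∈ A ∩ B, G.neighborSet u := by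
        intro v hv
        rcases key v hv with h | ⟨⟨u, huN, huAB⟩, _⟩
        · exact Or.inl h
        · exact Or.inr (Set.mem_biUnion huAB ((G.mem_neighborSet _ _).2
            ((G.mem_neighborSet _ _).1 huN).symm))
      exact ((hTfin.union (hTfin.biUnion (fun u hu => hTdeg u hu)))).subset hsub
    · intro v hv
      rcases key v hv with h | ⟨_, h⟩
      · exact hTdeg v h
      · exact h
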